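/- Let V be a set, let r ∈ V, and let parent : V → V be a function with parent(r) = r and such that for every x ∈ V there exists n ≥ 0 with parentⁿ(x) = r (so parent encodes a spanning tree rooted at r, whose tree edges are the pairs {x, parent(x)} for x ≠ r). For w ∈ V define desc(w) = { x ∈ V : ∃ n ≥ 0, parentⁿ(x) = w }. Let u, v ∈ V with u ≠ v, u ≠ r and v ≠ r, and set D = desc(v) Δ desc(u) (symmetric difference). Then { x ∈ V : x ≠ r and exactly one of x, parent(x) belongs to D } = { u, v }. In other words, the only tree edges crossing the cut induced by D are the parent edges of u and of v. -/

import Mathlib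

private lemma desc_step {V : Type*} (parent : V → V) (w x : V) :
    (∃ n : ℕ, parent^[n] x = w) ↔ x = w ∨ (∃ n : ℕ, parent^[n] (parent x) = w) := by
  constructor
  · rintro ⟨n, hn⟩
    cases n with
    | zero => exact Or.inl hn
    | succ m =>
      right
      exact ⟨m, by simpa [Function.iterate_succ_apply] using hn⟩
  · rintro (rfl | ⟨n, hn⟩)
    · exact ⟨0, rfl⟩
    · exact ⟨n + 1, by simpa [Function.iterate_succ_apply] using hn⟩

private lemma no_cycle {V : Type*} (r : V) (parent : V → V)
    (hroot_fix : parent r = r) (hreach : ∀ x : V, ∃ n : ℕ, parent^[n] x = r)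
    (w : V) (hw : w ≠ r) : ¬ ∃ n : ℕ, parent^[n] (parent w) = w := by
  rintro ⟨n, hn⟩
  obtain ⟨k, hk⟩ := hreach w
  have hcyc : parent^[n + 1] w = w := by
    simpa [Function.iterate_succ_apply] using hn
  have hmul : ∀ m : ℕ, parent^[m * (n + 1)] w = w := by
    intro m
    induction m with
    | zero => simp
    | succ p ih =>
      have : parent^[(p + 1) * (n + 1)] w = parent^[p * (n + 1)] (parent^[n + 1] w) := by
        rw [← Function.iterate_add_apply]
        ring_nf
      rw [this, hcyc, ih]
  have hkle : k ≤ k * (n + 1) := Nat.le_mul_of_pos_right k (Nat.succ_pos n)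
  have : parent^[k * (n + 1)] w = r := by
    obtain ⟨d, hd⟩ := Nat.exists_eq_add_of_le hkle
    rw [hd, Nat.add_comm, Function.iterate_add_apply, hk, Function.iterate_fixed hroot_fix]
  exact hw (by rw [← hmul k, this])

private lemma cross_iff {V : Type*} (r : V) (parent : V → V)
    (hroot_fix : parent r = r) (hreach : ∀ x : V, ∃ n : ℕ, parent^[n] x = r)
    (w : V) (hw : w ≠ r) (x : V) :
    Xor' (∃ n : ℕ, parent^[n] x = w) (∃ n : ℕ, parent^[n] (parent x) = w) ↔ x = w := by
  constructor
  · intro h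
    by_contra hxw
    rcases h with ⟨h1, h2⟩ | ⟨h1, h2⟩
    · rcases (desc_step parent w x).1 h1 with rfl | h
      · exact hxw rfl
      · exact h2 h
    · exact h2 ((desc_step parent w x).2 (Or.inr h1))
  · rintro rfl
    exact Or.inl ⟨⟨0, rfl⟩, no_cycle r parent hroot_fix hreach x hw⟩

private lemma xor_key (a a' b b' p q : Prop)
    (hp : Xor' a a' ↔ p) (hq : Xor' b b' ↔ q) (hpq : ¬(p ∧ q)) :
    Xor' (Xor' a b) (Xor' a' b') ↔ p ∨ q := by
  unfold Xor' at *
  unfold Xor at *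
  tauto

theorem tree_edges_crossing_symmDiff_desc {V : Type*} (r u v : V) (parent : V → V)
    (hroot_fix : parent r = r)
    (hreach : ∀ x : V, ∃ n : ℕ, parent^[n] x = r)
    (huv : u ≠ v) (hur : u ≠ r) (hvr : v ≠ r) :
    {x : V | x ≠ r ∧
        Xor' (x ∈ symmDiff {y : V | ∃ n : ℕ, parent^[n] y = v}
                           {y : V | ∃ n : ℕ, parent^[n] y = u})
             (parent x ∈ symmDiff {y : V | ∃ n : ℕ, parent^[n] y = v}
                                  {y : V | ∃ n : ℕ, parent^[n] y = u})} =
      {u, v} := by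
  ext x
  have hv := cross_iff r parent hroot_fix hreach v hvr x
  have hu := cross_iff r parent hroot_fix hreach u hur x
  have hsym : ∀ (S T : Set V) (y : V), y ∈ symmDiff S T ↔ Xor' (y ∈ S) (y ∈ T) :=
    fun S T y => Set.mem_symmDiff
  simp only [Set.mem_setOf_eq, hsym, Set.mem_insert_iff, Set.mem_singleton_iff]
  have key := xor_key _ _ _ _ _ _ hv hu
    (by rintro ⟨rfl, rfl⟩; exact huv rfl)
  rw [key]
  constructor
  · rintro ⟨_, h⟩
    exact h.symm
  · rintro (rfl | rfl)
    · exact ⟨hur, Or.inr rfl⟩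
    · exact ⟨hvr, Or.inl rfl⟩
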